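/- (Stationary radial solution of the FENE operator) Let b, C_d > 0 and γ = b/(2 + C_d b). The radial function f(r) = ((b−|r|²)/b)^γ · ((2 + C_d|r|²)/2)^{−γ}, defined on {|r|² < b}, satisfies the first-order equation (b r/(b−|r|²)) f(r) + ∇_r f(r) + (C_d/2) A_b(r) ∇_r f(r) = 0 for |r|² < b, where in the radial reduction A_b(r)∇f = |r|²∇f for radial f (since ∇f is parallel to r and A_b(r)r = |r|²r). -/

import Mathlib

open scoped RealInnerProductSpace

noncomputable def stretchMat {d : ℕ} (b : ℝ) (r v : EuclideanSpace ℝ (Fin d)) :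
    EuclideanSpace ℝ (Fin d) :=
  ((b + 1) * ‖r‖ ^ 2) • v - (b * ⟪r, v⟫) • r

/-- stationary radial solution of the FENE operator: with
`γ = b/(2 + C_d b)`, the radial function
`f(r) = ((b−|r|²)/b)^γ ((2+C_d|r|²)/2)^(−γ)` satisfies
`(b r/(b−|r|²)) f + ∇f + (C_d/2) A_b(r) ∇f = 0` on `{|r|² < b}`. -/
theorem fene_stationary_radial_solution
    (d : ℕ) (hd : d = 2 ∨ d = 3) (b Cd : ℝ) (hb : 0 < b) (hCd : 0 < Cd)
    (γ : ℝ) (hγ : γ = b / (2 + Cd * b))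
    (f : EuclideanSpace ℝ (Fin d) → ℝ)
    (hf : ∀ r, f r = ((b - ‖r‖ ^ 2) / b) ^ γ * ((2 + Cd * ‖r‖ ^ 2) / 2) ^ (-γ))
    (r : EuclideanSpace ℝ (Fin d)) (hr : ‖r‖ ^ 2 < b) :
    (b / (b - ‖r‖ ^ 2) * f r) • r + gradient f r
      + (Cd / 2) • stretchMat b r (gradient f r) = 0 := by
  set t : ℝ := ‖r‖ ^ 2 with ht
  have ht0 : 0 ≤ t := by positivity
  have hbt : 0 < b - t := by linarith
  have hB : 0 < 2 + Cd * t := by positivity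
  have hA : 0 < (b - t) / b := by positivity
  have hB2 : 0 < (2 + Cd * t) / 2 := by positivity
  -- the radial profile
  set h : ℝ → ℝ := fun s => ((b - s) / b) ^ γ * ((2 + Cd * s) / 2) ^ (-γ) with hh
  set c : ℝ := (-1 / b * γ * (((b - t) / b) ^ (γ - 1)))
      * (((2 + Cd * t) / 2) ^ (-γ))
      + (((b - t) / b) ^ γ)
      * (Cd / 2 * (-γ) * (((2 + Cd * t) / 2) ^ (-γ - 1))) with hc
  have hderiv : HasDerivAt h c t := by
    have h1 : HasDerivAt (fun s : ℝ => ((b - s) / b) ^ γ)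
        (-1 / b * γ * (((b - t) / b) ^ (γ - 1))) t := by
      have : HasDerivAt (fun s : ℝ => (b - s) / b) (-1 / b) t := by
        simpa [neg_div] using ((hasDerivAt_id t).const_sub b).div_const b
      have h1' := this.rpow_const (p := γ) (Or.inl (ne_of_gt hA))
      convert h1' using 1

    have h2 : HasDerivAt (fun s : ℝ => ((2 + Cd * s) / 2) ^ (-γ))
        (Cd / 2 * (-γ) * (((2 + Cd * t) / 2) ^ (-γ - 1))) t := by
      have : HasDerivAt (fun s : ℝ => (2 + Cd * s) / 2) (Cd / 2) t := by
        simpa using ((hasDerivAt_id t).const_mul Cd).const_add 2 |>.div_const 2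
      have h2' := this.rpow_const (p := -γ) (Or.inl (ne_of_gt hB2))
      convert h2' using 1

    exact h1.mul h2
  -- gradient of f
  have hsq : HasFDerivAt (fun x : EuclideanSpace ℝ (Fin d) => ‖x‖ ^ 2)
      (2 • (innerSL ℝ r)) r := (hasStrictFDerivAt_norm_sq r).hasFDerivAt
  have hFD : HasFDerivAt f (c • (2 • (innerSL ℝ r))) r := by
    have : HasFDerivAt (h ∘ fun x : EuclideanSpace ℝ (Fin d) => ‖x‖ ^ 2)
        (c • (2 • (innerSL ℝ r))) r := hderiv.comp_hasFDerivAt r hsq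
    convert this using 1
    funext x
    simp [hh, hf x, Function.comp]
  have hgrad : HasGradientAt f ((2 * c) • r) r := by
    rw [hasGradientAt_iff_hasFDerivAt]
    refine hFD.congr_fderiv ?_
    ext v
    simp [InnerProductSpace.toDual, real_inner_smul_left, two_smul,
      real_inner_comm]
    ring
  have hg : gradient f r = (2 * c) • r := hgrad.gradient
  -- reduce to a scalar identity
  have hinner : ⟪r, (2 * c) • r⟫ = 2 * c * t := by
    rw [real_inner_smul_right, real_inner_self_eq_norm_sq]
  rw [hg]
  have hstretch : stretchMat b r ((2 * c) • r) = (t * (2 * c)) • r := by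
    rw [stretchMat, hinner]
    rw [smul_smul, ← sub_smul]
    congr 1
    ring
  rw [hstretch]
  rw [smul_smul, ← add_smul, ← add_smul]
  have hscal : b / (b - t) * f r + 2 * c + Cd / 2 * (t * (2 * c)) = 0 := by
    have hfr : f r = ((b - t) / b) ^ γ * ((2 + Cd * t) / 2) ^ (-γ) := hf r
    have e1 : ((b - t) / b) ^ (γ - 1) = ((b - t) / b) ^ γ / ((b - t) / b) :=
      Real.rpow_sub_one (ne_of_gt hA) γ
    have e2 : ((2 + Cd * t) / 2) ^ (-γ - 1)
        = ((2 + Cd * t) / 2) ^ (-γ) / ((2 + Cd * t) / 2) :=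
      Real.rpow_sub_one (ne_of_gt hB2) (-γ)
    have hden : (2 : ℝ) + Cd * b ≠ 0 := by positivity
    rw [hfr, hc, e1, e2, hγ]
    field_simp
    ring
  rw [hscal, zero_smul]
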